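/- Let E be the rank-two vector bundle on F_e described in the context. Then the generic splitting type (2,2) cannot occur for E: if one assumes d_1 = d_2 = 2, then the Aprodu–Brinzanescu integer ℓ(c_1, c_2, 2, r) := c_2 + 4(2e − r) − 2(b + 3e + 6 + t) + 4r − 4e equals b − t − 2e − 4, which is negative by the assumption b < 2e+4+t, contradicting the nonnegativity required by Aprodu–Brinzanescu's theorem. Hence the generic splitting type of E is (3,1). -/
import Mathlib


/-!
# Statement 1

Setting as in the paper: `E` is the very ample rank-two bundle on the
Hirzebruch surface `F_e` (with `t ≥ 0`, `−2 < b < 2e+4+t`) arising as an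
extension `0 → (C₀ + b f) → E → (3C₀ + (3e+6+t) f) ⊗ J_W → 0`, so that
`c₁(E) ≡ 4C₀ + (b+3e+6+t) f` and `c₂(E) = 3b+8+t`.  For a rank-two bundle
with `c₁ ≡ a C₀ + (b_l + b_m) f`, generic splitting type `(d₁, d₂)` and
second numerical invariant `r`, the Aprodu–Brinzanescu integer is
`ℓ(c₁, c₂, d₁, r) := c₂ + a(d₁ e − r) − (b_l + b_m) d₁ + 2 d₁ r − d₁² e`;
here `a = 4`, `b_l + b_m = b + 3e + 6 + t`, and Aprodu–Brinzanescu's theorem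
says `ℓ(c₁, c₂, d₁, r) ≥ 0`.

**Statement.** The generic splitting type `(2,2)` cannot occur for `E`: if
`d₁ = d₂ = 2`, then `ℓ(c₁, c₂, 2, r) = b − t − 2e − 4`, which is negative
since `b < 2e+4+t`, contradicting nonnegativity.  Hence the generic splitting
type of `E` is `(3,1)`.
-/

/-- The Aprodu–Brinzanescu integer `ℓ(c₁, c₂, d₁, r)` for a rank-two bundle
on `F_e` with `c₁ ≡ a C₀ + blbm f`, second Chern class `c₂`, first numerical
invariant `d₁` and second numerical invariant `r`. -/
def ellAB (e a blbm c₂ d₁ r : ℤ) : ℤ :=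
  c₂ + a * (d₁ * e - r) - blbm * d₁ + 2 * d₁ * r - d₁ ^ 2 * e

/-- The Alzati–Besana bundle `E` on `F_e`, recorded through its Chern data,
its generic splitting type `(d₁, d₂)` and its second numerical invariant `r`,
together with the facts from the context. -/
structure AlBeBundleGen where
  /-- the invariant `e ≥ 0` of the Hirzebruch surface `F_e` -/
  e : ℤ
  he : 0 ≤ e
  t : ℤ
  ht : 0 ≤ t
  b : ℤ
  hb₁ : -2 < b
  hb₂ : b < 2 * e + 4 + t
  /-- `c₂(E) = 3b + 8 + t` -/
  c₂ : ℤ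
  hc₂ : c₂ = 3 * b + 8 + t
  /-- the generic splitting type `(d₁, d₂)` of `E`, with `d₂ ≤ d₁` -/
  d₁ : ℤ
  d₂ : ℤ
  hsplit : d₂ ≤ d₁
  /-- `c₁(E)·f = 4` forces `d₁ + d₂ = 4` -/
  hdeg : d₁ + d₂ = 4
  /-- `E` very ample makes its restriction to a general fibre very ample, so
  both summands have positive degree -/
  hva : 1 ≤ d₂
  /-- the second numerical invariant `r` of `E` -/
  r : ℤ
  /-- Aprodu–Brinzanescu's theorem: `ℓ(c₁, c₂, d₁, r) ≥ 0` -/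
  hAB : 0 ≤ ellAB e 4 (b + 3 * e + 6 + t) c₂ d₁ r

/-- Claim 1 of Proposition `Euniform`: `(2,2)` cannot occur
as the generic splitting type of `E`: for `d₁ = 2` the Aprodu–Brinzanescu
integer equals `b − t − 2e − 4 < 0`, contradicting `ℓ ≥ 0`; hence the generic
splitting type of `E` is `(3,1)`. -/
theorem generic_splitting_type_is_31 (S : AlBeBundleGen) :
    (∀ r' : ℤ, ellAB S.e 4 (S.b + 3 * S.e + 6 + S.t) S.c₂ 2 r' =
        S.b - S.t - 2 * S.e - 4) ∧
    S.b - S.t - 2 * S.e - 4 < 0 ∧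
    ¬(S.d₁ = 2 ∧ S.d₂ = 2) ∧
    (S.d₁ = 3 ∧ S.d₂ = 1) := by
  obtain ⟨e,he,t,ht,b,hb₁,hb₂,c₂,hc₂,d₁,d₂,hsplit,hdeg,hva,r,hAB⟩ := S
  simp only [ellAB] at hAB ⊢
  refine ⟨fun r' => by ring_nf; omega, by omega, ?_, ?_⟩
  · rintro ⟨h1, h2⟩
    subst h1; nlinarith [hAB]
  · have hne : d₁ ≠ 2 := by rintro rfl; nlinarith [hAB]
    omega
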